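/- Let β > 0 be real and A ∈ ℂ with Re(A) < 0. Define z : ℝ → ℂ by z(t) = √(−β/Re(A)) · exp( −i·(Im(A)/Re(A))·β·t ). Then z solves the ordinary differential equation z'(t) = β·z(t) + A·|z(t)|²·z(t) for all t ∈ ℝ; moreover, if Im(A) ≠ 0, then z is periodic with period T = 2π·Re(A)/(Im(A)·β). -/

import Mathlib

open Complex

noncomputable section

/-- The explicit bifurcated periodic solution of the reduced equation
`z' = βz + A|z|²z`: for `β > 0` and `Re A < 0`,
`z(t) = √(−β/Re A) exp(−i (Im A/Re A) β t)` solves the ODE, and when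
`Im A ≠ 0` it is periodic with period `T = 2π Re A/(Im A · β)`. -/
theorem bifurcated_periodic_solution (β : ℝ) (hβ : 0 < β) (A : ℂ) (hA : A.re < 0)
    (z : ℝ → ℂ)
    (hz : z = fun t : ℝ => (Real.sqrt (-β / A.re) : ℂ) *
      Complex.exp (-Complex.I * ((A.im / A.re : ℝ) : ℂ) * (β : ℂ) * (t : ℂ))) :
    (∀ t : ℝ, HasDerivAt z ((β : ℂ) * z t + A * (((‖z t‖ : ℝ) : ℂ)) ^ 2 * z t) t)
    ∧ (A.im ≠ 0 → Function.Periodic z (2 * Real.pi * A.re / (A.im * β))) := by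
  have hre : A.re ≠ 0 := ne_of_lt hA
  set μ : ℂ := -Complex.I * ((A.im / A.re : ℝ) : ℂ) * (β : ℂ) with hμ
  have habs : ∀ t : ℝ, (((‖z t‖ : ℝ) : ℂ)) ^ 2 = ((-β / A.re : ℝ) : ℂ) := by
    intro t
    have hpos : (0:ℝ) ≤ -β / A.re := le_of_lt (div_pos_of_neg_of_neg (by linarith) hA)
    have : ‖z t‖ = Real.sqrt (-β / A.re) := by
      rw [hz]
      simp only [norm_mul, Complex.norm_exp]
      rw [Complex.norm_real, Real.norm_eq_abs, _root_.abs_of_nonneg (Real.sqrt_nonneg _)]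
      have : (μ * t).re = 0 := by
        simp [hμ, Complex.mul_re, Complex.mul_im]
      rw [show -Complex.I * ((A.im / A.re : ℝ) : ℂ) * (β : ℂ) * (t : ℂ) = μ * t from rfl,
        this, Real.exp_zero, mul_one]
    rw [this]
    rw [← Complex.ofReal_pow, Real.sq_sqrt hpos]
  have hderiv : ∀ t : ℝ, HasDerivAt z (μ * z t) t := by
    intro t
    rw [hz]
    have h1 : HasDerivAt (fun t : ℝ => μ * (t : ℂ)) μ t := by
      simpa using ((hasDerivAt_id t).ofReal_comp.const_mul μ)
    have h2 := (h1.cexp).const_mul ((Real.sqrt (-β / A.re) : ℂ))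
    convert h2 using 1; rfl; ring_nf
  constructor
  · intro t
    have key : (β : ℂ) * z t + A * (((‖z t‖ : ℝ) : ℂ)) ^ 2 * z t = μ * z t := by
      rw [habs t]
      have hA' : A = (A.re : ℂ) + (A.im : ℂ) * Complex.I := by
        simp [Complex.ext_iff]
      rw [hA', hμ]
      push_cast
      field_simp
      have hre' : (A.re:ℂ) ≠ 0 := by exact_mod_cast hre
      rw [show ((A.re:ℂ) + (A.im:ℂ) * Complex.I).re = A.re by simp]
      field_simp
      ring
    rw [key]
    exact hderiv t
  · intro him t
    rw [hz]
    simp only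
    congr 1
    rw [show -Complex.I * ((A.im / A.re : ℝ) : ℂ) * (β : ℂ) * ((t + 2 * Real.pi * A.re / (A.im * β) : ℝ) : ℂ)
      = μ * t + μ * ((2 * Real.pi * A.re / (A.im * β) : ℝ) : ℂ) by push_cast [hμ]; ring]
    rw [Complex.exp_add]
    have : μ * ((2 * Real.pi * A.re / (A.im * β) : ℝ) : ℂ) = -(2 * Real.pi * Complex.I) := by
      rw [hμ]
      push_cast
      have hβ' : (β : ℂ) ≠ 0 := by exact_mod_cast ne_of_gt hβ
      have hre' : (A.re : ℂ) ≠ 0 := by exact_mod_cast hre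
      have him' : (A.im : ℂ) ≠ 0 := by exact_mod_cast him
      field_simp
    rw [this, Complex.exp_neg, Complex.exp_two_pi_mul_I]
    simp
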